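/- Let ξ(i) = i + 2c be an increasing height function on I_n. Writing p = k_n(p)·n + r_n(p) with r_n(p) ∈ [1,n], the bijection φ_ξ satisfies, for any i ∈ I_n and p ∈ ℤ: φ_ξ(i, ξ(i)+2p) = (α_{r_n(p), r_n(p+i)}, 2k_n(p)+1) if r_n(p) < r_n(p+i), and φ_ξ(i, ξ(i)+2p) = (α_{r_n(p+i), r_n(p)}, 2k_n(p)+2) if r_n(p) > r_n(p+i). -/

import Mathlib

/-- `r_n(p)`: the unique element of `[1,n]` with `p ≡ r_n(p) mod n`. -/
def rmod (n p : ℤ) : ℤ := (p - 1) % n + 1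

/-- `k_n(p)`: the unique integer with `p = k_n(p)·n + r_n(p)`, `r_n(p) ∈ [1,n]`. -/
def kdiv (n p : ℤ) : ℤ := (p - 1) / n

lemma rk_def (n p : ℤ) (hn : 0 < n) :
    p = kdiv n p * n + rmod n p ∧ 1 ≤ rmod n p ∧ rmod n p ≤ n := by
  unfold kdiv rmod
  have h1 := Int.emod_nonneg (p-1) (by omega : n ≠ 0)
  have h2 := Int.emod_lt_of_pos (p-1) hn
  have h3 := Int.mul_ediv_add_emod (p-1) n
  refine ⟨?_, by omega, by omega⟩
  have h4 : n * ((p-1)/n) = ((p-1)/n) * n := mul_comm _ _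
  linarith

lemma rk_unique (n p k r : ℤ) (hn : 0 < n) (h : p = k * n + r) (h1 : 1 ≤ r) (h2 : r ≤ n) :
    kdiv n p = k ∧ rmod n p = r := by
  obtain ⟨hp, hr1, hr2⟩ := rk_def n p hn
  have hd : (kdiv n p - k) * n = r - rmod n p := by linear_combination h - hp
  have hk : kdiv n p = k := by
    rcases lt_trichotomy (kdiv n p) k with h' | h' | h'
    · exfalso
      have hh : (kdiv n p - k) * n ≤ (-1) * n :=
        mul_le_mul_of_nonneg_right (by omega) (by omega)
      linarith
    · exact h'
    · exfalso
      have hh : (1:ℤ) * n ≤ (kdiv n p - k) * n :=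
        mul_le_mul_of_nonneg_right (by omega) (by omega)
      linarith
  rw [hk, sub_self, zero_mul] at hd
  exact ⟨hk, by omega⟩

lemma rk_succ_lt (n p : ℤ) (hn : 0 < n) (h : rmod n p < n) :
    rmod n (p+1) = rmod n p + 1 ∧ kdiv n (p+1) = kdiv n p := by
  obtain ⟨hp, h1, h2⟩ := rk_def n p hn
  have := rk_unique n (p+1) (kdiv n p) (rmod n p + 1) hn (by linarith) (by omega) (by omega)
  tauto

lemma rk_succ_eq (n p : ℤ) (hn : 0 < n) (h : rmod n p = n) :
    rmod n (p+1) = 1 ∧ kdiv n (p+1) = kdiv n p + 1 := by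
  obtain ⟨hp, h1, h2⟩ := rk_def n p hn
  rw [h] at hp
  have := rk_unique n (p+1) (kdiv n p + 1) 1 hn (by linear_combination hp) (by omega) (by omega)
  tauto

lemma rk_pred_gt (n p : ℤ) (hn : 0 < n) (h : 1 < rmod n p) :
    rmod n (p-1) = rmod n p - 1 ∧ kdiv n (p-1) = kdiv n p := by
  obtain ⟨hp, h1, h2⟩ := rk_def n p hn
  have := rk_unique n (p-1) (kdiv n p) (rmod n p - 1) hn (by linarith) (by omega) (by omega)
  tauto

lemma rk_pred_eq (n p : ℤ) (hn : 0 < n) (h : rmod n p = 1) :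
    rmod n (p-1) = n ∧ kdiv n (p-1) = kdiv n p - 1 := by
  obtain ⟨hp, h1, h2⟩ := rk_def n p hn
  rw [h] at hp
  have := rk_unique n (p-1) (kdiv n p - 1) n hn (by linear_combination hp) (by omega) le_rfl
  tauto

lemma rmod_ne (n i p : ℤ) (hn : 0 < n) (hi1 : 1 ≤ i) (hi2 : i ≤ n - 1) :
    rmod n (p + i) ≠ rmod n p := by
  intro h
  obtain ⟨hp, hr1, hr2⟩ := rk_def n p hn
  obtain ⟨hq, hs1, hs2⟩ := rk_def n (p+i) hn
  rw [h] at hq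
  have hd : i = (kdiv n (p+i) - kdiv n p) * n := by linear_combination hq - hp
  rcases le_or_gt (kdiv n (p+i) - kdiv n p) 0 with h' | h'
  · have hh : (kdiv n (p+i) - kdiv n p) * n ≤ 0 * n :=
      mul_le_mul_of_nonneg_right h' (by omega)
    linarith
  · have hh : (1:ℤ) * n ≤ (kdiv n (p+i) - kdiv n p) * n :=
      mul_le_mul_of_nonneg_right (by omega) (by omega)
    linarith

/-- For the increasing height function `ξ(i) = i + 2c` on `I_n`, if `φ : Î_n → R_n^+ × ℤ`
satisfies the recursive characterization of the bijection `φ_ξ` (positive roots `α_{a,b}`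
encoded as pairs `(a,b)`), then for any `i ∈ I_n` and `p ∈ ℤ`:
`φ_ξ(i, ξ(i)+2p) = (α_{r_n(p), r_n(p+i)}, 2k_n(p)+1)` if `r_n(p) < r_n(p+i)`, and
`φ_ξ(i, ξ(i)+2p) = (α_{r_n(p+i), r_n(p)}, 2k_n(p)+2)` if `r_n(p) > r_n(p+i)`. -/
theorem stmt10 (n c : ℤ) (hn : 1 < n) (ξ : ℤ → ℤ) (hξ : ∀ i, ξ i = i + 2 * c)
    (φ : ℤ × ℤ → (ℤ × ℤ) × ℤ)
    (h1 : ∀ i, 1 ≤ i → i ≤ n - 1 → φ (i, ξ i) = ((i, n), 0))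
    (h2 : ∀ i p a b k, 1 ≤ i → i ≤ n - 1 → (2 : ℤ) ∣ (p - i) →
      1 ≤ a → a < b → b ≤ n → φ (i, p) = ((a, b), k) →
      φ (i, p + 2) = if b < n then ((a + 1, b + 1), k) else ((1, a + 1), k + 1))
    (h3 : ∀ i p a b k, 1 ≤ i → i ≤ n - 1 → (2 : ℤ) ∣ (p - i) →
      1 ≤ a → a < b → b ≤ n → φ (i, p) = ((a, b), k) →
      φ (i, p - 2) = if 1 < a then ((a - 1, b - 1), k) else ((b - 1, n), k - 1)) :
    ∀ i p : ℤ, 1 ≤ i → i ≤ n - 1 →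
      (rmod n p < rmod n (p + i) →
        φ (i, ξ i + 2 * p) = ((rmod n p, rmod n (p + i)), 2 * kdiv n p + 1)) ∧
      (rmod n (p + i) < rmod n p →
        φ (i, ξ i + 2 * p) = ((rmod n (p + i), rmod n p), 2 * kdiv n p + 2)) := by
  intro i p hi1 hi2
  have hn0 : (0:ℤ) < n := by omega
  have hpar : ∀ q : ℤ, (2:ℤ) ∣ (ξ i + 2*q - i) := fun q => ⟨c + q, by rw [hξ]; ring⟩
  suffices h : ∀ q : ℤ,
      (rmod n q < rmod n (q + i) →
        φ (i, ξ i + 2 * q) = ((rmod n q, rmod n (q + i)), 2 * kdiv n q + 1)) ∧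
      (rmod n (q + i) < rmod n q →
        φ (i, ξ i + 2 * q) = ((rmod n (q + i), rmod n q), 2 * kdiv n q + 2)) by
    exact h p
  have hbase :
      (rmod n 0 < rmod n (0 + i) →
        φ (i, ξ i + 2 * 0) = ((rmod n 0, rmod n (0 + i)), 2 * kdiv n 0 + 1)) ∧
      (rmod n (0 + i) < rmod n 0 →
        φ (i, ξ i + 2 * 0) = ((rmod n (0 + i), rmod n 0), 2 * kdiv n 0 + 2)) := by
    have e0 := rk_unique n 0 (-1) n hn0 (by ring) (by omega) le_rfl
    have ei := rk_unique n (0 + i) 0 i hn0 (by ring) hi1 (by omega)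
    constructor
    · intro h'; exfalso; rw [e0.2, ei.2] at h'; omega
    · intro _
      rw [e0.2, ei.2, e0.1]
      have hb := h1 i hi1 hi2
      norm_num
      simpa using hb
  have hup : ∀ q : ℤ,
      ((rmod n q < rmod n (q + i) →
        φ (i, ξ i + 2 * q) = ((rmod n q, rmod n (q + i)), 2 * kdiv n q + 1)) ∧
      (rmod n (q + i) < rmod n q →
        φ (i, ξ i + 2 * q) = ((rmod n (q + i), rmod n q), 2 * kdiv n q + 2))) →
      ((rmod n (q+1) < rmod n (q+1 + i) →
        φ (i, ξ i + 2 * (q+1)) = ((rmod n (q+1), rmod n (q+1 + i)), 2 * kdiv n (q+1) + 1)) ∧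
      (rmod n (q+1 + i) < rmod n (q+1) →
        φ (i, ξ i + 2 * (q+1)) = ((rmod n (q+1 + i), rmod n (q+1)), 2 * kdiv n (q+1) + 2))) := by
    intro q hq
    obtain ⟨hpq, hr1, hr2⟩ := rk_def n q hn0
    obtain ⟨hpq', hs1, hs2⟩ := rk_def n (q+i) hn0
    have hne := rmod_ne n i q hn0 hi1 hi2
    have hrw : ξ i + 2 * (q + 1) = ξ i + 2 * q + 2 := by ring
    have hrw2 : q + 1 + i = (q + i) + 1 := by ring
    rcases hne.lt_or_gt with hlt | hlt
    · -- rmod n (q+i) < rmod n q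
      have hφ := hq.2 hlt
      have hstep := h2 i (ξ i + 2*q) (rmod n (q+i)) (rmod n q) (2*kdiv n q + 2)
        hi1 hi2 (hpar q) hs1 hlt hr2 hφ
      by_cases hb : rmod n q < n
      · rw [if_pos hb] at hstep
        have hrq := rk_succ_lt n q hn0 hb
        have hri := rk_succ_lt n (q+i) hn0 (by omega)
        constructor
        · intro h'; exfalso; rw [hrw2, hri.1, hrq.1] at h'; omega
        · intro _
          rw [hrw, hrw2, hri.1, hrq.1, hrq.2]
          exact hstep
      · have hb' : rmod n q = n := by omega
        rw [if_neg hb] at hstep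
        have hrq := rk_succ_eq n q hn0 hb'
        have hri := rk_succ_lt n (q+i) hn0 (by omega)
        constructor
        · intro _
          rw [hrw, hrw2, hri.1, hrq.1, hrq.2, hstep, Prod.mk.injEq, Prod.mk.injEq]
          exact ⟨⟨rfl, rfl⟩, by ring⟩
        · intro h'; exfalso; rw [hrw2, hri.1, hrq.1] at h'; omega
    · -- rmod n q < rmod n (q+i)
      have hφ := hq.1 hlt
      have hstep := h2 i (ξ i + 2*q) (rmod n q) (rmod n (q+i)) (2*kdiv n q + 1)
        hi1 hi2 (hpar q) hr1 hlt hs2 hφ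
      by_cases hb : rmod n (q+i) < n
      · rw [if_pos hb] at hstep
        have hrq := rk_succ_lt n q hn0 (by omega)
        have hri := rk_succ_lt n (q+i) hn0 hb
        constructor
        · intro _
          rw [hrw, hrw2, hri.1, hrq.1, hrq.2]
          exact hstep
        · intro h'; exfalso; rw [hrw2, hri.1, hrq.1] at h'; omega
      · have hb' : rmod n (q+i) = n := by omega
        rw [if_neg hb] at hstep
        have hrq := rk_succ_lt n q hn0 (by omega)
        have hri := rk_succ_eq n (q+i) hn0 hb'
        constructor
        · intro h'; exfalso; rw [hrw2, hri.1, hrq.1] at h'; omega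
        · intro _
          rw [hrw, hrw2, hri.1, hrq.1, hrq.2, hstep, Prod.mk.injEq, Prod.mk.injEq]
          exact ⟨⟨rfl, rfl⟩, by ring⟩
  have hdown : ∀ q : ℤ,
      ((rmod n q < rmod n (q + i) →
        φ (i, ξ i + 2 * q) = ((rmod n q, rmod n (q + i)), 2 * kdiv n q + 1)) ∧
      (rmod n (q + i) < rmod n q →
        φ (i, ξ i + 2 * q) = ((rmod n (q + i), rmod n q), 2 * kdiv n q + 2))) →
      ((rmod n (q-1) < rmod n (q-1 + i) →
        φ (i, ξ i + 2 * (q-1)) = ((rmod n (q-1), rmod n (q-1 + i)), 2 * kdiv n (q-1) + 1)) ∧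
      (rmod n (q-1 + i) < rmod n (q-1) →
        φ (i, ξ i + 2 * (q-1)) = ((rmod n (q-1 + i), rmod n (q-1)), 2 * kdiv n (q-1) + 2))) := by
    intro q hq
    obtain ⟨hpq, hr1, hr2⟩ := rk_def n q hn0
    obtain ⟨hpq', hs1, hs2⟩ := rk_def n (q+i) hn0
    have hne := rmod_ne n i q hn0 hi1 hi2
    have hrw : ξ i + 2 * (q - 1) = ξ i + 2 * q - 2 := by ring
    have hrw2 : q - 1 + i = (q + i) - 1 := by ring
    rcases hne.lt_or_gt with hlt | hlt
    · -- rmod n (q+i) < rmod n q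
      have hφ := hq.2 hlt
      have hstep := h3 i (ξ i + 2*q) (rmod n (q+i)) (rmod n q) (2*kdiv n q + 2)
        hi1 hi2 (hpar q) hs1 hlt hr2 hφ
      by_cases hb : 1 < rmod n (q+i)
      · rw [if_pos hb] at hstep
        have hrq := rk_pred_gt n q hn0 (by omega)
        have hri := rk_pred_gt n (q+i) hn0 hb
        constructor
        · intro h'; exfalso; rw [hrw2, hri.1, hrq.1] at h'; omega
        · intro _
          rw [hrw, hrw2, hri.1, hrq.1, hrq.2]
          exact hstep
      · have hb' : rmod n (q+i) = 1 := by omega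
        rw [if_neg hb] at hstep
        have hrq := rk_pred_gt n q hn0 (by omega)
        have hri := rk_pred_eq n (q+i) hn0 hb'
        constructor
        · intro _
          rw [hrw, hrw2, hri.1, hrq.1, hrq.2, hstep, Prod.mk.injEq, Prod.mk.injEq]
          exact ⟨⟨rfl, rfl⟩, by ring⟩
        · intro h'; exfalso; rw [hrw2, hri.1, hrq.1] at h'; omega
    · -- rmod n q < rmod n (q+i)
      have hφ := hq.1 hlt
      have hstep := h3 i (ξ i + 2*q) (rmod n q) (rmod n (q+i)) (2*kdiv n q + 1)
        hi1 hi2 (hpar q) hr1 hlt hs2 hφ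
      by_cases hb : 1 < rmod n q
      · rw [if_pos hb] at hstep
        have hrq := rk_pred_gt n q hn0 hb
        have hri := rk_pred_gt n (q+i) hn0 (by omega)
        constructor
        · intro _
          rw [hrw, hrw2, hri.1, hrq.1, hrq.2]
          exact hstep
        · intro h'; exfalso; rw [hrw2, hri.1, hrq.1] at h'; omega
      · have hb' : rmod n q = 1 := by omega
        rw [if_neg hb] at hstep
        have hrq := rk_pred_eq n q hn0 hb'
        have hri := rk_pred_gt n (q+i) hn0 (by omega)
        constructor
        · intro h'; exfalso; rw [hrw2, hri.1, hrq.1] at h'; omega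
        · intro _
          rw [hrw, hrw2, hri.1, hrq.1, hrq.2, hstep, Prod.mk.injEq, Prod.mk.injEq]
          exact ⟨⟨rfl, rfl⟩, by ring⟩
  intro q
  induction q using Int.induction_on with
  | zero => exact hbase
  | succ m ih => exact hup _ ih
  | pred m ih => exact hdown _ ih
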